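/- Law of large numbers for the second kernel moment (lower-right Gram block): the D×D-matrix-valued random variable (n h_n^{d+2})^{-1} Σ_{i=1}^n K((X_i − x)/h_n) (X_i − x)(X_i − x)^T converges entrywise in probability to f(0) · ∫_{ℝ^d} K(L u) (L u)(L u)^T du as n → ∞. -/

import Mathlib

open MeasureTheory Metric Filter
open scoped ENNReal NNReal Topology

lemma coord_abs_le_norm {n : ℕ} (x : EuclideanSpace ℝ (Fin n)) (a : Fin n) : |x a| ≤ ‖x‖ := by
  rw [EuclideanSpace.norm_eq, ← Real.sqrt_sq_eq_abs]
  apply Real.sqrt_le_sqrt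
  have := Finset.single_le_sum (f := fun i => ‖x i‖ ^ 2)
    (fun i _ => sq_nonneg _) (Finset.mem_univ a)
  simpa [Real.norm_eq_abs, sq_abs] using this

set_option maxHeartbeats 4000000 in
theorem lln_kernel_second_moment
    (d D : ℕ) (hd : 0 < d) (hdD : d ≤ D) (r : ℝ) (hr : 0 < r)
    (φ : EuclideanSpace ℝ (Fin d) → EuclideanSpace ℝ (Fin D))
    (hφ : ContDiff ℝ 1 φ)
    (c C : ℝ) (hc : 0 < c) (hcC : c ≤ C)
    (hbil : ∀ z ∈ closedBall (0 : EuclideanSpace ℝ (Fin d)) r,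
      ∀ z' ∈ closedBall (0 : EuclideanSpace ℝ (Fin d)) r,
        c * ‖z - z'‖ ≤ ‖φ z - φ z'‖ ∧ ‖φ z - φ z'‖ ≤ C * ‖z - z'‖)
    (hL : Function.Injective (fderiv ℝ φ 0))
    (f : EuclideanSpace ℝ (Fin d) → ℝ)
    (hf_meas : Measurable f)
    (hf_nonneg : ∀ z, 0 ≤ f z)
    (hf_supp : ∀ z ∉ closedBall (0 : EuclideanSpace ℝ (Fin d)) r, f z = 0)
    (hf_bdd : ∃ M : ℝ, ∀ z, f z ≤ M)
    (hf_prob : ∫ z, f z = 1)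
    (hf_cont : ContinuousAt f 0) (hf_pos : 0 < f 0)
    (K : EuclideanSpace ℝ (Fin D) → ℝ)
    (hK_nonneg : ∀ u, 0 ≤ K u) (hK_cont : Continuous K)
    (hK_supp : HasCompactSupport K)
    (Ω : Type*) [MeasurableSpace Ω] (ℙ : Measure Ω) [IsProbabilityMeasure ℙ]
    (X : ℕ → Ω → EuclideanSpace ℝ (Fin D))
    (hX_meas : ∀ i, Measurable (X i))
    (hX_indep : ProbabilityTheory.iIndepFun X ℙ)
    (hX_law : ∀ i, Measure.map (X i) ℙ =
      Measure.map φ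
        ((volume.restrict (closedBall (0 : EuclideanSpace ℝ (Fin d)) r)).withDensity
          fun z => ENNReal.ofReal (f z)))
    (h : ℕ → ℝ) (hh_pos : ∀ n, 0 < h n)
    (hh0 : Tendsto h atTop (nhds 0))
    (hnh : Tendsto (fun n : ℕ => (n : ℝ) * h n ^ d) atTop atTop) :
    ∀ a b : Fin D,
      TendstoInMeasure ℙ
        (fun (n : ℕ) ω =>
          (∑ i ∈ Finset.range n,
              K ((h n)⁻¹ • (X i ω - φ 0)) * ((X i ω - φ 0) a * (X i ω - φ 0) b)) /
            ((n : ℝ) * h n ^ (d + 2)))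
        atTop
        (fun _ => f 0 *
          ∫ u, K (fderiv ℝ φ 0 u) * (fderiv ℝ φ 0 u a * fderiv ℝ φ 0 u b)) := by
  intro a b
  have hφc : Continuous φ := hφ.continuous
  obtain ⟨M_f, hM_f⟩ := hf_bdd
  have hM_f0 : 0 ≤ M_f := le_trans (hf_nonneg 0) (hM_f 0)
  obtain ⟨M_K, hM_K⟩ := hK_supp.exists_bound_of_continuous hK_cont
  have hM_K0 : 0 ≤ M_K := le_trans (norm_nonneg _) (hM_K 0)
  have hM_K' : ∀ x, |K x| ≤ M_K := by
    intro x; simpa [Real.norm_eq_abs] using hM_K x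
  obtain ⟨R, hR0, hRsub⟩ := hK_supp.isBounded.subset_closedBall_lt 0 0
  have hKR : ∀ x, K x ≠ 0 → ‖x‖ ≤ R := fun x hx =>
    mem_closedBall_zero_iff.1 (hRsub (subset_tsupport K (Function.mem_support.2 hx)))
  -- the function g
  set g : ℝ → EuclideanSpace ℝ (Fin D) → ℝ :=
    fun t x => K (t⁻¹ • (x - φ 0)) * ((x - φ 0) a * (x - φ 0) b) with hg_def
  have hg_cont : ∀ t, Continuous (g t) := by
    intro t
    have h1 : Continuous fun x : EuclideanSpace ℝ (Fin D) => t⁻¹ • (x - φ 0) := by fun_prop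
    have h2 : Continuous fun x : EuclideanSpace ℝ (Fin D) => (x - φ 0) a := by
      change Continuous fun x : EuclideanSpace ℝ (Fin D) =>
        (EuclideanSpace.proj (𝕜 := ℝ) a) (x - φ 0)
      exact (EuclideanSpace.proj a).continuous.comp (continuous_id.sub continuous_const)
    have h3 : Continuous fun x : EuclideanSpace ℝ (Fin D) => (x - φ 0) b := by
      change Continuous fun x : EuclideanSpace ℝ (Fin D) =>
        (EuclideanSpace.proj (𝕜 := ℝ) b) (x - φ 0)
      exact (EuclideanSpace.proj b).continuous.comp (continuous_id.sub continuous_const)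
    exact (hK_cont.comp h1).mul (h2.mul h3)
  have hg_meas : ∀ t, Measurable (g t) := fun t => (hg_cont t).measurable
  -- pointwise bound on g
  have hg_bd : ∀ t, 0 < t → ∀ x, |g t x| ≤ M_K * (R * t) ^ 2 := by
    intro t ht x
    by_cases hKx : K (t⁻¹ • (x - φ 0)) = 0
    · simp only [hg_def, hKx, zero_mul, abs_zero]
      positivity
    · have h1 : ‖x - φ 0‖ ≤ R * t := by
        have h2 := hKR _ hKx
        have h3 : ‖t⁻¹ • (x - φ 0)‖ = t⁻¹ * ‖x - φ 0‖ := by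
          rw [norm_smul, Real.norm_eq_abs, abs_of_pos (by positivity)]
        rw [h3] at h2
        calc ‖x - φ 0‖ = t * (t⁻¹ * ‖x - φ 0‖) := by field_simp
          _ ≤ t * R := by nlinarith
          _ = R * t := mul_comm _ _
      have ha' : |(x - φ 0) a| ≤ R * t := le_trans (coord_abs_le_norm _ a) h1
      have hb' : |(x - φ 0) b| ≤ R * t := le_trans (coord_abs_le_norm _ b) h1
      have hRt : (0:ℝ) ≤ R * t := by positivity
      calc |g t x| = |K (t⁻¹ • (x - φ 0))| * (|(x - φ 0) a| * |(x - φ 0) b|) := by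
            rw [hg_def]; rw [abs_mul, abs_mul]
        _ ≤ M_K * ((R * t) * (R * t)) := by
            apply mul_le_mul (hM_K' _) ?_ (by positivity) hM_K0
            exact mul_le_mul ha' hb' (abs_nonneg _) hRt
        _ = M_K * (R * t) ^ 2 := by ring
  -- the localization property
  have hloc : ∀ t, 0 < t → ∀ z : EuclideanSpace ℝ (Fin d),
      f z ≠ 0 → K (t⁻¹ • (φ z - φ 0)) ≠ 0 → c * ‖z‖ ≤ R * t := by
    intro t ht z hfz hKz
    have hz : z ∈ closedBall (0 : EuclideanSpace ℝ (Fin d)) r := by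
      by_contra hzc
      exact hfz (hf_supp z hzc)
    have h2 := hKR _ hKz
    have h3 : ‖t⁻¹ • (φ z - φ 0)‖ = t⁻¹ * ‖φ z - φ 0‖ := by
      rw [norm_smul, Real.norm_eq_abs, abs_of_pos (by positivity)]
    rw [h3] at h2
    have h4 : ‖φ z - φ 0‖ ≤ R * t := by
      calc ‖φ z - φ 0‖ = t * (t⁻¹ * ‖φ z - φ 0‖) := by field_simp
        _ ≤ t * R := by nlinarith
        _ = R * t := mul_comm _ _
    have h5 := (hbil z hz 0 (mem_closedBall_self hr.le)).1
    rw [sub_zero] at h5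
    linarith
  -- expectation formula
  have hExp : ∀ (G : EuclideanSpace ℝ (Fin D) → ℝ), Measurable G → ∀ i : ℕ,
      ∫ ω, G (X i ω) ∂ℙ = ∫ z, f z * G (φ z) := by
    intro G hG i
    rw [← integral_map (hX_meas i).aemeasurable hG.aestronglyMeasurable, hX_law i,
      integral_map hφc.measurable.aemeasurable hG.aestronglyMeasurable]
    have h1 : (fun z : EuclideanSpace ℝ (Fin d) => ENNReal.ofReal (f z))
        = fun z => ((fun z => (f z).toNNReal) z : ℝ≥0∞) := rfl
    rw [h1, integral_withDensity_eq_integral_smul hf_meas.real_toNNReal]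
    calc ∫ z in closedBall 0 r, (f z).toNNReal • G (φ z)
        = ∫ z in closedBall 0 r, f z * G (φ z) := by
          apply setIntegral_congr_fun measurableSet_closedBall
          intro z _
          simp [NNReal.smul_def, Real.coe_toNNReal _ (hf_nonneg z)]
      _ = ∫ z, f z * G (φ z) := by
          apply setIntegral_eq_integral_of_forall_compl_eq_zero
          intro z hz; rw [hf_supp z hz, zero_mul]
  -- derivative abbreviation
  set L := fderiv ℝ φ 0 with hL_def
  set μ' : ℝ := f 0 * ∫ u, K (L u) * (L u a * L u b) with hmu_def
  -- rescaled quantities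
  set w : ℕ → EuclideanSpace ℝ (Fin d) → EuclideanSpace ℝ (Fin D) :=
    fun n u => (h n)⁻¹ • (φ (h n • u) - φ 0) with hw_def
  set F : ℕ → EuclideanSpace ℝ (Fin d) → ℝ :=
    fun n u => f (h n • u) * (K (w n u) * (w n u a * w n u b)) with hF_def
  set I : ℕ → ℝ := fun n => ∫ z, f z * g (h n) (φ z) with hI_def
  have hwcont : ∀ n, Continuous (w n) := by
    intro n
    exact ((hφc.comp (continuous_id.const_smul (h n))).sub continuous_const).const_smul ((h n)⁻¹)
  have hwa : ∀ n (j : Fin D), Continuous fun u => (w n u) j := by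
    intro n j
    change Continuous fun u => (EuclideanSpace.proj (𝕜 := ℝ) j) (w n u)
    exact (EuclideanSpace.proj j).continuous.comp (hwcont n)
  have hkey : ∀ n, I n / h n ^ (d + 2) = ∫ u, F n u := by
    intro n
    have hne : h n ≠ 0 := (hh_pos n).ne'
    have hsub : ∫ u, f (h n • u) * g (h n) (φ (h n • u))
        = ((h n) ^ d)⁻¹ • ∫ z, f z * g (h n) (φ z) := by
      simpa [finrank_euclideanSpace_fin] using
        MeasureTheory.Measure.integral_comp_smul_of_nonneg volume
          (fun z => f z * g (h n) (φ z)) (h n) (hR := (hh_pos n).le)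
    have hpt : ∀ u, f (h n • u) * g (h n) (φ (h n • u)) = h n ^ 2 * F n u := by
      intro u
      have e1 : (φ (h n • u) - φ 0) a = h n * (w n u) a := by
        simp only [hw_def, PiLp.smul_apply, smul_eq_mul]
        field_simp
      have e2 : (φ (h n • u) - φ 0) b = h n * (w n u) b := by
        simp only [hw_def, PiLp.smul_apply, smul_eq_mul]
        field_simp
      have e3 : K ((h n)⁻¹ • (φ (h n • u) - φ 0)) = K (w n u) := rfl
      simp only [hg_def, hF_def, e1, e2, e3]
      ring
    have hIeq : I n = h n ^ d * (h n ^ 2 * ∫ u, F n u) := by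
      calc I n = ∫ z, f z * g (h n) (φ z) := rfl
        _ = h n ^ d * ∫ u, f (h n • u) * g (h n) (φ (h n • u)) := by
            rw [hsub, smul_eq_mul]; field_simp
        _ = h n ^ d * ∫ u, h n ^ 2 * F n u := by simp only [hpt]
        _ = h n ^ d * (h n ^ 2 * ∫ u, F n u) := by rw [integral_const_mul]
    rw [hIeq, pow_add]
    field_simp
  have hDCT : Tendsto (fun n => ∫ u, F n u) atTop
      (𝓝 (∫ u, f 0 * (K (L u) * (L u a * L u b)))) := by
    apply tendsto_integral_filter_of_dominated_convergence
      (bound := (closedBall (0 : EuclideanSpace ℝ (Fin d)) (R / c)).indicator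
        (fun _ => M_f * (M_K * (R * R))))
    · apply Eventually.of_forall
      intro n
      apply Measurable.aestronglyMeasurable
      exact (hf_meas.comp (continuous_id.const_smul (h n)).measurable).mul
        (((hK_cont.comp (hwcont n)).mul ((hwa n a).mul (hwa n b))).measurable)
    · apply Eventually.of_forall
      intro n
      apply ae_of_all
      intro u
      by_cases hF0 : F n u = 0
      · rw [hF0, norm_zero]
        apply Set.indicator_nonneg
        intro x _
        positivity
      · have hfne : f (h n • u) ≠ 0 := fun h0 => hF0 (by simp [hF_def, h0])
        have hKne : K (w n u) ≠ 0 := fun h0 => hF0 (by simp [hF_def, h0])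
        have hcz : c * ‖h n • u‖ ≤ R * h n := hloc (h n) (hh_pos n) (h n • u) hfne hKne
        have hnu : ‖u‖ ≤ R / c := by
          have hsm : ‖h n • u‖ = h n * ‖u‖ := by
            rw [norm_smul, Real.norm_eq_abs, abs_of_pos (hh_pos n)]
          rw [hsm] at hcz
          rw [le_div_iff₀ hc]
          nlinarith [hh_pos n]
        rw [Set.indicator_of_mem (mem_closedBall_zero_iff.2 hnu)]
        have hwR : ‖w n u‖ ≤ R := hKR _ hKne
        have h1 : |(w n u) a| ≤ R := le_trans (coord_abs_le_norm _ _) hwR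
        have h2 : |(w n u) b| ≤ R := le_trans (coord_abs_le_norm _ _) hwR
        have hfa : |f (h n • u)| ≤ M_f := by
          rw [abs_of_nonneg (hf_nonneg _)]; exact hM_f _
        calc ‖F n u‖ = |f (h n • u)| * (|K (w n u)| * (|(w n u) a| * |(w n u) b|)) := by
              rw [hF_def]; rw [Real.norm_eq_abs, abs_mul, abs_mul, abs_mul]
          _ ≤ M_f * (M_K * (R * R)) := by
              apply mul_le_mul hfa ?_ (by positivity) hM_f0
              apply mul_le_mul (hM_K' _) ?_ (by positivity) hM_K0
              exact mul_le_mul h1 h2 (abs_nonneg _) (le_trans (abs_nonneg _) h1)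
    · rw [integrable_indicator_iff measurableSet_closedBall]
      exact integrableOn_const measure_closedBall_lt_top.ne
    · apply Eventually.of_forall
      intro u
      have hw_tend : Tendsto (fun n => w n u) atTop (𝓝 (L u)) := by
        have hder : HasFDerivAt φ L 0 :=
          ((hφ.differentiable one_ne_zero) 0).hasFDerivAt
        have hline := (hder.hasLineDerivAt u).tendsto_slope_zero
        have hh' : Tendsto h atTop (𝓝[≠] (0:ℝ)) :=
          tendsto_nhdsWithin_of_tendsto_nhds_of_eventually_within _ hh0
            (Eventually.of_forall fun n => (hh_pos n).ne')
        have := hline.comp hh'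
        have h0 : ((fun t : ℝ => t⁻¹ • (φ (0 + t • u) - φ 0)) ∘ h) = fun n => w n u := by
          funext n
          simp only [Function.comp_apply, zero_add, hw_def]
        rwa [h0] at this
      have hf_tend : Tendsto (fun n => f (h n • u)) atTop (𝓝 (f 0)) := by
        have hsm : Tendsto (fun n => h n • u) atTop (𝓝 (0 : EuclideanSpace ℝ (Fin d))) := by
          simpa using hh0.smul_const u
        exact hf_cont.tendsto.comp hsm
      have hK_tend : Tendsto (fun n => K (w n u)) atTop (𝓝 (K (L u))) :=
        (hK_cont.tendsto _).comp hw_tend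
      have hco : ∀ j : Fin D, Tendsto (fun n => (w n u) j) atTop (𝓝 ((L u) j)) := by
        intro j
        change Tendsto (fun n => (EuclideanSpace.proj (𝕜 := ℝ) j) (w n u)) atTop (𝓝 _)
        exact ((EuclideanSpace.proj j).continuous.tendsto _).comp hw_tend
      exact hf_tend.mul (hK_tend.mul ((hco a).mul (hco b)))
  have hI_tend : Tendsto (fun n => I n / h n ^ (d + 2)) atTop (𝓝 μ') := by
    have hlim : (∫ u, f 0 * (K (L u) * (L u a * L u b))) = μ' := by
      rw [hmu_def, integral_const_mul]
    rw [← hlim]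
    simp only [hkey]
    exact hDCT
  -- Step B: variance machinery
  have hterm_meas : ∀ n i, Measurable fun ω => g (h n) (X i ω) :=
    fun n i => (hg_meas (h n)).comp (hX_meas i)
  have hmem : ∀ n i, MemLp (fun ω => g (h n) (X i ω)) 2 ℙ := by
    intro n i
    apply MemLp.of_bound (hterm_meas n i).aestronglyMeasurable (M_K * (R * h n) ^ 2)
    exact ae_of_all _ fun ω => by
      simpa [Real.norm_eq_abs] using hg_bd (h n) (hh_pos n) (X i ω)
  set S : ℕ → Ω → ℝ := fun n ω => ∑ i ∈ Finset.range n, g (h n) (X i ω) with hS_def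
  set Y : ℕ → Ω → ℝ := fun n ω => S n ω / ((n:ℝ) * h n ^ (d+2)) with hY_def
  have hS_sum : ∀ n, S n = (∑ i ∈ Finset.range n, fun ω => g (h n) (X i ω)) := by
    intro n; funext ω; rw [Finset.sum_apply]
  have hS_mem : ∀ n, MemLp (S n) 2 ℙ := by
    intro n; rw [hS_sum n]
    exact memLp_finset_sum' _ (fun i _ => hmem n i)
  have hY_mem : ∀ n, MemLp (Y n) 2 ℙ := by
    intro n
    have hyc : Y n = fun ω => ((n:ℝ) * h n ^ (d+2))⁻¹ * S n ω := by
      funext ω; simp [hY_def, div_eq_inv_mul]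
    rw [hyc]
    exact (hS_mem n).const_mul _
  have hS_int : ∀ n, ∫ ω, S n ω ∂ℙ = n * I n := by
    intro n
    have : ∫ ω, S n ω ∂ℙ = ∑ i ∈ Finset.range n, ∫ ω, g (h n) (X i ω) ∂ℙ :=
      integral_finset_sum _ (fun i _ => ((hmem n i).integrable one_le_two))
    rw [this, Finset.sum_congr rfl
      (fun i _ => hExp (g (h n)) (hg_meas _) i), Finset.sum_const, Finset.card_range,
      nsmul_eq_mul]
  have hY_mean : ∀ n, 1 ≤ n → ∫ ω, Y n ω ∂ℙ = I n / h n ^ (d + 2) := by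
    intro n hn
    have hn0 : ((n:ℝ)) ≠ 0 := Nat.cast_ne_zero.2 (by omega)
    have hne : h n ≠ 0 := (hh_pos n).ne'
    calc ∫ ω, Y n ω ∂ℙ = (∫ ω, S n ω ∂ℙ) / ((n:ℝ) * h n ^ (d+2)) := integral_div _ _
      _ = ((n:ℝ) * I n) / ((n:ℝ) * h n ^ (d+2)) := by rw [hS_int n]
      _ = I n / h n ^ (d+2) := by
          rw [mul_div_mul_left _ _ hn0]
  have hmean : Tendsto (fun n => ∫ ω, Y n ω ∂ℙ) atTop (𝓝 μ') := by
    apply Tendsto.congr' ?_ hI_tend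
    filter_upwards [eventually_ge_atTop 1] with n hn
    exact (hY_mean n hn).symm
  -- second moment bound
  set Vol1 : ℝ := (volume (ball (0 : EuclideanSpace ℝ (Fin d)) 1)).toReal with hVol_def
  set B : ℝ := M_f * (M_K * R ^ 2) ^ 2 * ((R / c) ^ d * Vol1) with hB_def
  have hVol0 : 0 ≤ Vol1 := ENNReal.toReal_nonneg
  have hB0 : 0 ≤ B := by positivity
  have hsq : ∀ n i, ∫ ω, (g (h n) (X i ω))^2 ∂ℙ ≤ B * h n ^ (d + 4) := by
    intro n i
    have hG : Measurable fun x => (g (h n) x)^2 := (hg_meas (h n)).pow_const 2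
    rw [show (∫ ω, (g (h n) (X i ω))^2 ∂ℙ)
      = ∫ z, f z * (g (h n) (φ z))^2 from hExp _ hG i]
    set s := closedBall (0 : EuclideanSpace ℝ (Fin d)) (R * h n / c) with hs_def
    set cst := M_f * (M_K * (R * h n) ^ 2) ^ 2 with hcst_def
    have hcst0 : 0 ≤ cst := by positivity
    have hind_int : Integrable (s.indicator fun _ => cst) :=
      (integrable_indicator_iff measurableSet_closedBall).2
        (integrableOn_const measure_closedBall_lt_top.ne)
    have hle : ∀ z, f z * (g (h n) (φ z))^2 ≤ s.indicator (fun _ => cst) z := by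
      intro z
      by_cases h0 : f z * (g (h n) (φ z))^2 = 0
      · rw [h0]; exact Set.indicator_nonneg (fun _ _ => hcst0) z
      · have hfz : f z ≠ 0 := by intro hh; exact h0 (by rw [hh, zero_mul])
        have hKz : K ((h n)⁻¹ • (φ z - φ 0)) ≠ 0 := by
          intro hh; exact h0 (by simp [hg_def, hh])
        have hz := hloc (h n) (hh_pos n) z hfz hKz
        have hzs : z ∈ s := by
          rw [hs_def, mem_closedBall_zero_iff, le_div_iff₀ hc]
          linarith
        rw [Set.indicator_of_mem hzs]
        have hgb := hg_bd (h n) (hh_pos n) (φ z)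
        have hsq' : (g (h n) (φ z))^2 ≤ (M_K * (R * h n)^2)^2 := by
          rw [← sq_abs]
          exact pow_le_pow_left₀ (abs_nonneg _) hgb 2
        calc f z * (g (h n) (φ z))^2
            ≤ M_f * (M_K * (R * h n)^2)^2 :=
              mul_le_mul (hM_f z) hsq' (sq_nonneg _) hM_f0
          _ = cst := rfl
    have hint_left : Integrable fun z => f z * (g (h n) (φ z))^2 := by
      apply hind_int.mono'
        ((hf_meas.mul (((hg_meas (h n)).comp hφc.measurable).pow_const 2)).aestronglyMeasurable)
      exact ae_of_all _ fun z => by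
        change ‖f z * (g (h n) (φ z))^2‖ ≤ _
        rw [Real.norm_eq_abs, abs_of_nonneg (mul_nonneg (hf_nonneg z) (sq_nonneg _))]
        exact hle z
    have hmono := integral_mono hint_left hind_int hle
    rw [integral_indicator measurableSet_closedBall, setIntegral_const] at hmono
    have hvol : (volume (closedBall (0 : EuclideanSpace ℝ (Fin d)) (R * h n / c))).toReal
        = (R * h n / c)^d * Vol1 := by
      have hq : (0:ℝ) ≤ R * h n / c := le_of_lt (div_pos (mul_pos hR0 (hh_pos n)) hc)
      rw [Measure.addHaar_closedBall volume 0 hq, ENNReal.toReal_mul,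
        ENNReal.toReal_ofReal (pow_nonneg hq _), finrank_euclideanSpace_fin]
    calc (∫ z, f z * (g (h n) (φ z))^2) ≤ (volume s).toReal • cst := hmono
      _ = (R * h n / c)^d * Vol1 * cst := by rw [smul_eq_mul, hs_def, hvol]
      _ = B * h n ^ (d + 4) := by
          rw [hB_def, hcst_def, show R * h n / c = (R / c) * h n by ring, mul_pow, pow_add]
          ring
  have hvar : ∀ n, 1 ≤ n →
      ProbabilityTheory.variance (Y n) ℙ ≤ B / ((n:ℝ) * h n ^ d) := by
    intro n hn
    have hn0 : ((n:ℝ)) ≠ 0 := Nat.cast_ne_zero.2 (by omega)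
    have hne : h n ≠ 0 := (hh_pos n).ne'
    have hyc : Y n = fun ω => ((n:ℝ) * h n ^ (d+2))⁻¹ * S n ω := by
      funext ω; simp [hY_def, div_eq_inv_mul]
    have hvS : ProbabilityTheory.variance (S n) ℙ
        = ∑ i ∈ Finset.range n, ProbabilityTheory.variance (fun ω => g (h n) (X i ω)) ℙ := by
      rw [hS_sum n]
      refine ProbabilityTheory.IndepFun.variance_sum (fun i _ => hmem n i) ?_
      intro i _ j _ hij
      exact (hX_indep.indepFun hij).comp (hg_meas (h n)) (hg_meas (h n))
    have hvterm : ∀ i, ProbabilityTheory.variance (fun ω => g (h n) (X i ω)) ℙ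
        ≤ B * h n ^ (d+4) := by
      intro i
      refine le_trans
        (ProbabilityTheory.variance_le_expectation_sq (hterm_meas n i).aestronglyMeasurable) ?_
      exact le_trans (le_of_eq rfl) (hsq n i)
    calc ProbabilityTheory.variance (Y n) ℙ
        = (((n:ℝ) * h n ^ (d+2))⁻¹)^2 * ProbabilityTheory.variance (S n) ℙ := by
          rw [hyc, ProbabilityTheory.variance_const_mul]
      _ ≤ (((n:ℝ) * h n ^ (d+2))⁻¹)^2 * ((n:ℝ) * (B * h n ^ (d+4))) := by
          apply mul_le_mul_of_nonneg_left ?_ (sq_nonneg _)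
          rw [hvS]
          calc (∑ i ∈ Finset.range n, ProbabilityTheory.variance (fun ω => g (h n) (X i ω)) ℙ)
              ≤ ∑ _i ∈ Finset.range n, B * h n ^ (d+4) :=
                Finset.sum_le_sum (fun i _ => hvterm i)
            _ = (n:ℝ) * (B * h n ^ (d+4)) := by
                rw [Finset.sum_const, Finset.card_range, nsmul_eq_mul]
      _ = B / ((n:ℝ) * h n ^ d) := by
          field_simp
          ring
  have hvar0 : Tendsto (fun n : ℕ => B / ((n:ℝ) * h n ^ d)) atTop (𝓝 0) :=
    Filter.Tendsto.div_atTop tendsto_const_nhds hnh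
  -- final assembly
  rw [tendstoInMeasure_iff_dist]
  intro ε hε
  show Tendsto (fun n => ℙ {ω | ε ≤ dist (Y n ω) μ'}) atTop (𝓝 0)
  have hhalf : 0 < ε/2 := by positivity
  have hub : ∀ᶠ n in atTop, ℙ {ω | ε ≤ dist (Y n ω) μ'}
      ≤ ENNReal.ofReal ((B / ((n:ℝ) * h n ^ d)) / (ε/2)^2) := by
    have hm' := hmean.eventually (Metric.ball_mem_nhds μ' hhalf)
    filter_upwards [hm', eventually_ge_atTop 1] with n hn1 hn2
    simp only [Metric.mem_ball, Real.dist_eq] at hn1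
    have hsubset : {ω | ε ≤ dist (Y n ω) μ'}
        ⊆ {ω | ε/2 ≤ |Y n ω - ∫ ω', Y n ω' ∂ℙ|} := by
      intro ω hω
      simp only [Set.mem_setOf_eq, Real.dist_eq] at hω ⊢
      have htri := abs_sub_le (Y n ω) (∫ ω', Y n ω' ∂ℙ) μ'
      linarith
    refine le_trans (measure_mono hsubset) ?_
    refine le_trans (ProbabilityTheory.meas_ge_le_variance_div_sq (hY_mem n) hhalf) ?_
    apply ENNReal.ofReal_le_ofReal
    gcongr
    exact hvar n hn2
  have htend : Tendsto (fun n : ℕ => ENNReal.ofReal ((B / ((n:ℝ) * h n ^ d)) / (ε/2)^2))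
      atTop (𝓝 0) := by
    have h2 : Tendsto (fun n : ℕ => (B / ((n:ℝ) * h n ^ d)) / (ε/2)^2) atTop
        (𝓝 (0 / (ε/2)^2)) := hvar0.div_const _
    simpa using ENNReal.tendsto_ofReal h2
  exact tendsto_of_tendsto_of_tendsto_of_le_of_le' tendsto_const_nhds htend
    (Eventually.of_forall fun n => zero_le) hub
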